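/- Let α₁, α₂, α₃, α₄ > 0 and let σ : (−1/2,1/2)² → ℝ be the four-phase checkerboard conductivity: σ = α₁ on Q₁ = (0,1/2)², σ = α₂ on Q₂ = (0,1/2)×(−1/2,0), σ = α₃ on Q₃ = (−1/2,0)², and σ = α₄ on Q₄ = (−1/2,0)×(0,1/2). Let h₁, h₂ ∈ ℝ with h₁ ≠ 0 and h₂ ≠ 0. If there exist measurable functions f, g : ℝ → ℝ such that σ(y₁,y₂) = f(h₁y₁ + h₂y₂)·g(h₁y₂ − h₂y₁) for almost every (y₁,y₂) ∈ (−1/2,1/2)², then α₁ = α₂ = α₃ = α₄, i.e. σ is constant almost everywhere. -/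

import Mathlib

open MeasureTheory

/-- The four-phase checkerboard conductivity on the plane: value `α₁` on the
open quadrant `y₁ > 0, y₂ > 0`, `α₂` on `y₁ > 0, y₂ < 0`, `α₃` on
`y₁ < 0, y₂ < 0` and `α₄` on `y₁ < 0, y₂ > 0`. -/
noncomputable def checkerboard (α₁ α₂ α₃ α₄ : ℝ) (y : ℝ × ℝ) : ℝ :=
  if 0 < y.1 then (if 0 < y.2 then α₁ else α₂) else (if 0 < y.2 then α₄ else α₃)

/-! ### Auxiliary definitions -/

/-- The open unit square centered at the origin. -/
def sqr : Set (ℝ × ℝ) := Set.Ioo (-(1 : ℝ) / 2) (1 / 2) ×ˢ Set.Ioo (-(1 : ℝ) / 2) (1 / 2)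

/-- The inverse of the rotated-coordinates map `y ↦ (h₁y₁+h₂y₂, h₁y₂−h₂y₁)`. -/
noncomputable def phi (h₁ h₂ : ℝ) (z : ℝ × ℝ) : ℝ × ℝ :=
  ((h₁ * z.1 - h₂ * z.2) / (h₁ ^ 2 + h₂ ^ 2), (h₂ * z.1 + h₁ * z.2) / (h₁ ^ 2 + h₂ ^ 2))

/-- `phi` as a linear equivalence. -/
noncomputable def phiEquiv (h₁ h₂ : ℝ) (hr : h₁ ^ 2 + h₂ ^ 2 ≠ 0) : (ℝ × ℝ) ≃ₗ[ℝ] (ℝ × ℝ) where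
  toFun := phi h₁ h₂
  invFun y := (h₁ * y.1 + h₂ * y.2, h₁ * y.2 - h₂ * y.1)
  map_add' z w := by ext <;> simp [phi] <;> ring
  map_smul' c z := by ext <;> simp [phi, Prod.smul_fst, Prod.smul_snd, smul_eq_mul] <;> ring
  left_inv z := by ext <;> simp only [phi] <;> field_simp <;> ring
  right_inv y := by ext <;> simp only [phi] <;> field_simp <;> ring

/-- a.e. statements can be pulled back through `phi`. -/
lemma stepA (h₁ h₂ : ℝ) (hr : h₁ ^ 2 + h₂ ^ 2 ≠ 0) {p : ℝ × ℝ → Prop}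
    (hp : ∀ᵐ y : ℝ × ℝ, p y) :
    ∀ᵐ z : ℝ × ℝ, p (phi h₁ h₂ z) := by
  have hdet : LinearMap.det (phiEquiv h₁ h₂ hr).toLinearMap ≠ 0 :=
    (LinearEquiv.isUnit_det' _).ne_zero
  rw [ae_iff] at hp ⊢
  have := Measure.addHaar_preimage_linearMap (volume : Measure (ℝ × ℝ)) hdet {y | ¬ p y}
  have heq : (⇑(phiEquiv h₁ h₂ hr).toLinearMap) ⁻¹' {y | ¬ p y}
      = {z : ℝ × ℝ | ¬ p (phi h₁ h₂ z)} := rfl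
  rw [heq] at this
  rw [this, hp, mul_zero]

/-- Four boxes, tensor product values: diagonal products agree. -/
lemma boxfour {f g : ℝ → ℝ} {u₁ u₂ u₁' u₂' v₁ v₂ v₁' v₂' a b c d : ℝ}
    (hu : u₁ < u₂) (hu' : u₁' < u₂') (hv : v₁ < v₂) (hv' : v₁' < v₂')
    (h1 : ∀ᵐ z : ℝ × ℝ ∂(volume.restrict (Set.Ioo u₁ u₂ ×ˢ Set.Ioo v₁ v₂)), f z.1 * g z.2 = a)
    (h2 : ∀ᵐ z : ℝ × ℝ ∂(volume.restrict (Set.Ioo u₁ u₂ ×ˢ Set.Ioo v₁' v₂')), f z.1 * g z.2 = c)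
    (h3 : ∀ᵐ z : ℝ × ℝ ∂(volume.restrict (Set.Ioo u₁' u₂' ×ˢ Set.Ioo v₁ v₂)), f z.1 * g z.2 = d)
    (h4 : ∀ᵐ z : ℝ × ℝ ∂(volume.restrict (Set.Ioo u₁' u₂' ×ˢ Set.Ioo v₁' v₂')), f z.1 * g z.2 = b) :
    a * b = c * d := by
  have key : ∀ {p q : ℝ}, p < q → (ae (volume.restrict (Set.Ioo p q))).NeBot := by
    intro p q hpq
    refine ae_neBot.2 ?_
    rw [Ne, Measure.restrict_eq_zero, Real.volume_Ioo]
    exact (ENNReal.ofReal_pos.2 (sub_pos.2 hpq)).ne'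
  have hUB : (ae (volume.restrict (Set.Ioo u₁ u₂))).NeBot := key hu
  have hUB' : (ae (volume.restrict (Set.Ioo u₁' u₂'))).NeBot := key hu'
  have hVB : (ae (volume.restrict (Set.Ioo v₁ v₂))).NeBot := key hv
  have hVB' : (ae (volume.restrict (Set.Ioo v₁' v₂'))).NeBot := key hv'
  have conv : ∀ {p q r s e : ℝ},
      (∀ᵐ z : ℝ × ℝ ∂(volume.restrict (Set.Ioo p q ×ˢ Set.Ioo r s)), f z.1 * g z.2 = e) →
      ∀ᵐ x ∂(volume.restrict (Set.Ioo p q)), ∀ᵐ y ∂(volume.restrict (Set.Ioo r s)),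
        f x * g y = e := by
    intro p q r s e h
    have hpr := Measure.prod_restrict (μ := (volume : Measure ℝ)) (ν := (volume : Measure ℝ))
      (Set.Ioo p q) (Set.Ioo r s)
    rw [← Measure.volume_eq_prod] at hpr
    rw [← hpr] at h
    exact Measure.ae_ae_of_ae_prod h
  obtain ⟨x, hx1, hx2⟩ := ((conv h1).and (conv h2)).exists
  obtain ⟨x', hx3, hx4⟩ := ((conv h3).and (conv h4)).exists
  obtain ⟨y, hy1, hy3⟩ := (hx1.and hx3).exists
  obtain ⟨y', hy2, hy4⟩ := (hx2.and hx4).exists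
  rw [← hy1, ← hy4, ← hy2, ← hy3]; ring

/-- Persistence of strict linear-form bounds on a small ball. -/
lemma ball_AB (h₁ h₂ u v lA uA lB uB : ℝ)
    (hA : h₁ * u - h₂ * v ∈ Set.Ioo lA uA) (hB : h₂ * u + h₁ * v ∈ Set.Ioo lB uB) :
    ∃ δ, 0 < δ ∧ ∀ w : ℝ × ℝ, dist w (u, v) < δ →
      h₁ * w.1 - h₂ * w.2 ∈ Set.Ioo lA uA ∧ h₂ * w.1 + h₁ * w.2 ∈ Set.Ioo lB uB := by
  have hcont : Continuous (fun w : ℝ × ℝ => (h₁ * w.1 - h₂ * w.2, h₂ * w.1 + h₁ * w.2)) := by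
    fun_prop
  have hS : IsOpen ((fun w : ℝ × ℝ => (h₁ * w.1 - h₂ * w.2, h₂ * w.1 + h₁ * w.2)) ⁻¹'
      (Set.Ioo lA uA ×ˢ Set.Ioo lB uB)) := (isOpen_Ioo.prod isOpen_Ioo).preimage hcont
  have hmem : ((u, v) : ℝ × ℝ) ∈ (fun w : ℝ × ℝ => (h₁ * w.1 - h₂ * w.2, h₂ * w.1 + h₁ * w.2)) ⁻¹'
      (Set.Ioo lA uA ×ˢ Set.Ioo lB uB) := ⟨hA, hB⟩
  rcases Metric.isOpen_iff.1 hS (u, v) hmem with ⟨δ, hδ, hsub⟩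
  exact ⟨δ, hδ, fun w hw => hsub (Metric.mem_ball.2 hw)⟩

/-- Membership of `phi w` in the square from bounds on the linear forms. -/
lemma sq_mem (h₁ h₂ : ℝ) (hr : 0 < h₁ ^ 2 + h₂ ^ 2) (w : ℝ × ℝ)
    (hA1 : -((h₁ ^ 2 + h₂ ^ 2) / 2) < h₁ * w.1 - h₂ * w.2)
    (hA2 : h₁ * w.1 - h₂ * w.2 < (h₁ ^ 2 + h₂ ^ 2) / 2)
    (hB1 : -((h₁ ^ 2 + h₂ ^ 2) / 2) < h₂ * w.1 + h₁ * w.2)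
    (hB2 : h₂ * w.1 + h₁ * w.2 < (h₁ ^ 2 + h₂ ^ 2) / 2) :
    phi h₁ h₂ w ∈ sqr := by
  refine ⟨⟨?_, ?_⟩, ⟨?_, ?_⟩⟩
  · exact (lt_div_iff₀ hr).2 (by linarith)
  · exact (div_lt_iff₀ hr).2 (by linarith)
  · exact (lt_div_iff₀ hr).2 (by linarith)
  · exact (div_lt_iff₀ hr).2 (by linarith)

/-- The checkerboard value at `phi w` equals the checkerboard value at the
unnormalized linear forms. -/
lemma check_phi_eq (α₁ α₂ α₃ α₄ h₁ h₂ : ℝ) (hr : 0 < h₁ ^ 2 + h₂ ^ 2) (w : ℝ × ℝ) :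
    checkerboard α₁ α₂ α₃ α₄ (phi h₁ h₂ w)
      = checkerboard α₁ α₂ α₃ α₄ (h₁ * w.1 - h₂ * w.2, h₂ * w.1 + h₁ * w.2) := by
  have e1 : (0 < (h₁ * w.1 - h₂ * w.2) / (h₁ ^ 2 + h₂ ^ 2)) ↔ (0 < h₁ * w.1 - h₂ * w.2) :=
    (lt_div_iff₀ hr).trans (by rw [zero_mul])
  have e2 : (0 < (h₂ * w.1 + h₁ * w.2) / (h₁ ^ 2 + h₂ ^ 2)) ↔ (0 < h₂ * w.1 + h₁ * w.2) :=
    (lt_div_iff₀ hr).trans (by rw [zero_mul])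
  simp only [checkerboard, phi, e1, e2]

lemma check_val₁ (α₁ α₂ α₃ α₄ : ℝ) (p : ℝ × ℝ) (h1 : 0 < p.1) (h2 : 0 < p.2) :
    checkerboard α₁ α₂ α₃ α₄ p = α₁ := by
  simp only [checkerboard]; rw [if_pos h1, if_pos h2]

lemma check_val₂ (α₁ α₂ α₃ α₄ : ℝ) (p : ℝ × ℝ) (h1 : 0 < p.1) (h2 : p.2 < 0) :
    checkerboard α₁ α₂ α₃ α₄ p = α₂ := by
  simp only [checkerboard]; rw [if_pos h1, if_neg (not_lt.2 h2.le)]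

lemma check_val₃ (α₁ α₂ α₃ α₄ : ℝ) (p : ℝ × ℝ) (h1 : p.1 < 0) (h2 : p.2 < 0) :
    checkerboard α₁ α₂ α₃ α₄ p = α₃ := by
  simp only [checkerboard]; rw [if_neg (not_lt.2 h1.le), if_neg (not_lt.2 h2.le)]

lemma check_val₄ (α₁ α₂ α₃ α₄ : ℝ) (p : ℝ × ℝ) (h1 : p.1 < 0) (h2 : 0 < p.2) :
    checkerboard α₁ α₂ α₃ α₄ p = α₄ := by
  simp only [checkerboard]; rw [if_neg (not_lt.2 h1.le), if_pos h2]

lemma div_pos_of_mul_pos {a b : ℝ} (h : 0 < b * a) : 0 < a / b := by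
  rcases mul_pos_iff.1 h with ⟨hb, ha⟩ | ⟨hb, ha⟩
  · exact div_pos ha hb
  · exact div_pos_of_neg_of_neg ha hb

lemma div_neg_of_mul_neg {a b : ℝ} (h : b * a < 0) : a / b < 0 := by
  rcases mul_neg_iff.1 h with ⟨hb, ha⟩ | ⟨hb, ha⟩
  · exact div_neg_of_neg_of_pos ha hb
  · exact div_neg_of_pos_of_neg ha hb

/-- The key rewriting of the linear forms at the special points `(s/h₂, t/h₁)`. -/
lemma AB_point (h₁ h₂ s t : ℝ) (hh₁ : h₁ ≠ 0) (hh₂ : h₂ ≠ 0) :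
    h₁ * (s / h₂) - h₂ * (t / h₁) = (h₁ ^ 2 * s - h₂ ^ 2 * t) / (h₁ * h₂) ∧
      h₂ * (s / h₂) + h₁ * (t / h₁) = s + t := by
  constructor
  · field_simp
  · field_simp

/-- Generic corner certificate. -/
lemma corner_core (α₁ α₂ α₃ α₄ h₁ h₂ s t e : ℝ) (hh₁ : h₁ ≠ 0) (hh₂ : h₂ ≠ 0)
    (lA uA lB uB : ℝ)
    (hAmem : (h₁ ^ 2 * s - h₂ ^ 2 * t) / (h₁ * h₂) ∈ Set.Ioo lA uA)
    (hBmem : s + t ∈ Set.Ioo lB uB)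
    (hlA : -((h₁ ^ 2 + h₂ ^ 2) / 2) ≤ lA) (huA : uA ≤ (h₁ ^ 2 + h₂ ^ 2) / 2)
    (hlB : -((h₁ ^ 2 + h₂ ^ 2) / 2) ≤ lB) (huB : uB ≤ (h₁ ^ 2 + h₂ ^ 2) / 2)
    (hval : ∀ p : ℝ × ℝ, p.1 ∈ Set.Ioo lA uA → p.2 ∈ Set.Ioo lB uB →
      checkerboard α₁ α₂ α₃ α₄ p = e) :
    ∃ δ, 0 < δ ∧ ∀ w : ℝ × ℝ, dist w (s / h₂, t / h₁) < δ →
      phi h₁ h₂ w ∈ sqr ∧ checkerboard α₁ α₂ α₃ α₄ (phi h₁ h₂ w) = e := by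
  have hr : (0 : ℝ) < h₁ ^ 2 + h₂ ^ 2 := by positivity
  obtain ⟨hA', hB'⟩ := AB_point h₁ h₂ s t hh₁ hh₂
  obtain ⟨δ, hδ, hball⟩ := ball_AB h₁ h₂ (s / h₂) (t / h₁) lA uA lB uB
    (by rw [hA']; exact hAmem) (by rw [hB']; exact hBmem)
  refine ⟨δ, hδ, fun w hw => ?_⟩
  obtain ⟨hAw, hBw⟩ := hball w hw
  constructor
  · exact sq_mem h₁ h₂ hr w (by linarith [hAw.1]) (by linarith [hAw.2])
      (by linarith [hBw.1]) (by linarith [hBw.2])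
  · rw [check_phi_eq α₁ α₂ α₃ α₄ h₁ h₂ hr w]
    exact hval _ hAw hBw

/-- The diagonal-product relation extracted from the factorization hypothesis. -/
lemma rel (α₁ α₂ α₃ α₄ h₁ h₂ : ℝ) (f g : ℝ → ℝ) (u v u' v' a c d b : ℝ)
    (H : ∀ᵐ z : ℝ × ℝ, phi h₁ h₂ z ∈ sqr →
      checkerboard α₁ α₂ α₃ α₄ (phi h₁ h₂ z) = f z.1 * g z.2)
    (c11 : ∃ δ, 0 < δ ∧ ∀ w : ℝ × ℝ, dist w (u, v) < δ →
      phi h₁ h₂ w ∈ sqr ∧ checkerboard α₁ α₂ α₃ α₄ (phi h₁ h₂ w) = a)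
    (c12 : ∃ δ, 0 < δ ∧ ∀ w : ℝ × ℝ, dist w (u, v') < δ →
      phi h₁ h₂ w ∈ sqr ∧ checkerboard α₁ α₂ α₃ α₄ (phi h₁ h₂ w) = c)
    (c21 : ∃ δ, 0 < δ ∧ ∀ w : ℝ × ℝ, dist w (u', v) < δ →
      phi h₁ h₂ w ∈ sqr ∧ checkerboard α₁ α₂ α₃ α₄ (phi h₁ h₂ w) = d)
    (c22 : ∃ δ, 0 < δ ∧ ∀ w : ℝ × ℝ, dist w (u', v') < δ →
      phi h₁ h₂ w ∈ sqr ∧ checkerboard α₁ α₂ α₃ α₄ (phi h₁ h₂ w) = b) :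
    a * b = c * d := by
  obtain ⟨δ₁, hδ₁, hc11⟩ := c11
  obtain ⟨δ₂, hδ₂, hc12⟩ := c12
  obtain ⟨δ₃, hδ₃, hc21⟩ := c21
  obtain ⟨δ₄, hδ₄, hc22⟩ := c22
  set δ : ℝ := min (min δ₁ δ₂) (min δ₃ δ₄) with hδdef
  have hδ : 0 < δ := lt_min (lt_min hδ₁ hδ₂) (lt_min hδ₃ hδ₄)
  have hd1 : δ ≤ δ₁ := le_trans (min_le_left _ _) (min_le_left _ _)
  have hd2 : δ ≤ δ₂ := le_trans (min_le_left _ _) (min_le_right _ _)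
  have hd3 : δ ≤ δ₃ := le_trans (min_le_right _ _) (min_le_left _ _)
  have hd4 : δ ≤ δ₄ := le_trans (min_le_right _ _) (min_le_right _ _)
  have key : ∀ (x y δi : ℝ), δ ≤ δi → ∀ z : ℝ × ℝ,
      z ∈ Set.Ioo (x - δ) (x + δ) ×ˢ Set.Ioo (y - δ) (y + δ) → dist z (x, y) < δi := by
    intro x y δi hle z hz
    rw [Prod.dist_eq]
    refine max_lt ?_ ?_
    · rw [Real.dist_eq]
      exact lt_of_lt_of_le (abs_lt.2 ⟨by linarith [hz.1.1], by linarith [hz.1.2]⟩) hle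
    · rw [Real.dist_eq]
      exact lt_of_lt_of_le (abs_lt.2 ⟨by linarith [hz.2.1], by linarith [hz.2.2]⟩) hle
  have mk : ∀ (x y δi e : ℝ), δ ≤ δi →
      (∀ w : ℝ × ℝ, dist w (x, y) < δi →
        phi h₁ h₂ w ∈ sqr ∧ checkerboard α₁ α₂ α₃ α₄ (phi h₁ h₂ w) = e) →
      ∀ᵐ z : ℝ × ℝ ∂(volume.restrict (Set.Ioo (x - δ) (x + δ) ×ˢ Set.Ioo (y - δ) (y + δ))),
        f z.1 * g z.2 = e := by
    intro x y δi e hle hc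
    filter_upwards [ae_restrict_of_ae H,
      ae_restrict_mem (measurableSet_Ioo.prod measurableSet_Ioo)] with z hz hm
    obtain ⟨hsq', hval⟩ := hc z (key x y δi hle z hm)
    exact (hz hsq').symm.trans hval
  exact boxfour (by linarith : u - δ < u + δ) (by linarith : u' - δ < u' + δ)
    (by linarith : v - δ < v + δ) (by linarith : v' - δ < v' + δ)
    (mk u v δ₁ a hd1 hc11) (mk u v' δ₂ c hd2 hc12)
    (mk u' v δ₃ d hd3 hc21) (mk u' v' δ₄ b hd4 hc22)

lemma abs_div_lt {a k R : ℝ} (hk : k ≠ 0) (h : |a| < |k| * R) : |a / k| < R := by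
  rw [abs_div]
  exact (div_lt_iff₀ (abs_pos.2 hk)).2 (by rw [mul_comm]; exact h)

lemma corner₁ (α₁ α₂ α₃ α₄ h₁ h₂ s t : ℝ) (hh₁ : h₁ ≠ 0) (hh₂ : h₂ ≠ 0)
    (hA : 0 < (h₁ * h₂) * (h₁ ^ 2 * s - h₂ ^ 2 * t))
    (hA2 : |h₁ ^ 2 * s - h₂ ^ 2 * t| < |h₁ * h₂| * ((h₁ ^ 2 + h₂ ^ 2) / 2))
    (hB : 0 < s + t) (hB2 : |s + t| < (h₁ ^ 2 + h₂ ^ 2) / 2) :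
    ∃ δ, 0 < δ ∧ ∀ w : ℝ × ℝ, dist w (s / h₂, t / h₁) < δ →
      phi h₁ h₂ w ∈ sqr ∧ checkerboard α₁ α₂ α₃ α₄ (phi h₁ h₂ w) = α₁ := by
  have hr : (0 : ℝ) < h₁ ^ 2 + h₂ ^ 2 := by positivity
  have habs := abs_div_lt (mul_ne_zero hh₁ hh₂) hA2
  exact corner_core α₁ α₂ α₃ α₄ h₁ h₂ s t α₁ hh₁ hh₂ 0 ((h₁ ^ 2 + h₂ ^ 2) / 2)
    0 ((h₁ ^ 2 + h₂ ^ 2) / 2)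
    ⟨div_pos_of_mul_pos hA, (abs_lt.1 habs).2⟩ ⟨hB, (abs_lt.1 hB2).2⟩
    (by linarith) le_rfl (by linarith) le_rfl
    (fun p hp1 hp2 => check_val₁ α₁ α₂ α₃ α₄ p hp1.1 hp2.1)

lemma corner₂ (α₁ α₂ α₃ α₄ h₁ h₂ s t : ℝ) (hh₁ : h₁ ≠ 0) (hh₂ : h₂ ≠ 0)
    (hA : 0 < (h₁ * h₂) * (h₁ ^ 2 * s - h₂ ^ 2 * t))
    (hA2 : |h₁ ^ 2 * s - h₂ ^ 2 * t| < |h₁ * h₂| * ((h₁ ^ 2 + h₂ ^ 2) / 2))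
    (hB : s + t < 0) (hB2 : |s + t| < (h₁ ^ 2 + h₂ ^ 2) / 2) :
    ∃ δ, 0 < δ ∧ ∀ w : ℝ × ℝ, dist w (s / h₂, t / h₁) < δ →
      phi h₁ h₂ w ∈ sqr ∧ checkerboard α₁ α₂ α₃ α₄ (phi h₁ h₂ w) = α₂ := by
  have hr : (0 : ℝ) < h₁ ^ 2 + h₂ ^ 2 := by positivity
  have habs := abs_div_lt (mul_ne_zero hh₁ hh₂) hA2
  exact corner_core α₁ α₂ α₃ α₄ h₁ h₂ s t α₂ hh₁ hh₂ 0 ((h₁ ^ 2 + h₂ ^ 2) / 2)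
    (-((h₁ ^ 2 + h₂ ^ 2) / 2)) 0
    ⟨div_pos_of_mul_pos hA, (abs_lt.1 habs).2⟩ ⟨(abs_lt.1 hB2).1, hB⟩
    (by linarith) le_rfl le_rfl (by linarith)
    (fun p hp1 hp2 => check_val₂ α₁ α₂ α₃ α₄ p hp1.1 hp2.2)

lemma corner₃ (α₁ α₂ α₃ α₄ h₁ h₂ s t : ℝ) (hh₁ : h₁ ≠ 0) (hh₂ : h₂ ≠ 0)
    (hA : (h₁ * h₂) * (h₁ ^ 2 * s - h₂ ^ 2 * t) < 0)
    (hA2 : |h₁ ^ 2 * s - h₂ ^ 2 * t| < |h₁ * h₂| * ((h₁ ^ 2 + h₂ ^ 2) / 2))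
    (hB : s + t < 0) (hB2 : |s + t| < (h₁ ^ 2 + h₂ ^ 2) / 2) :
    ∃ δ, 0 < δ ∧ ∀ w : ℝ × ℝ, dist w (s / h₂, t / h₁) < δ →
      phi h₁ h₂ w ∈ sqr ∧ checkerboard α₁ α₂ α₃ α₄ (phi h₁ h₂ w) = α₃ := by
  have hr : (0 : ℝ) < h₁ ^ 2 + h₂ ^ 2 := by positivity
  have habs := abs_div_lt (mul_ne_zero hh₁ hh₂) hA2
  exact corner_core α₁ α₂ α₃ α₄ h₁ h₂ s t α₃ hh₁ hh₂ (-((h₁ ^ 2 + h₂ ^ 2) / 2)) 0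
    (-((h₁ ^ 2 + h₂ ^ 2) / 2)) 0
    ⟨(abs_lt.1 habs).1, div_neg_of_mul_neg hA⟩ ⟨(abs_lt.1 hB2).1, hB⟩
    le_rfl (by linarith) le_rfl (by linarith)
    (fun p hp1 hp2 => check_val₃ α₁ α₂ α₃ α₄ p hp1.2 hp2.2)

lemma corner₄ (α₁ α₂ α₃ α₄ h₁ h₂ s t : ℝ) (hh₁ : h₁ ≠ 0) (hh₂ : h₂ ≠ 0)
    (hA : (h₁ * h₂) * (h₁ ^ 2 * s - h₂ ^ 2 * t) < 0)
    (hA2 : |h₁ ^ 2 * s - h₂ ^ 2 * t| < |h₁ * h₂| * ((h₁ ^ 2 + h₂ ^ 2) / 2))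
    (hB : 0 < s + t) (hB2 : |s + t| < (h₁ ^ 2 + h₂ ^ 2) / 2) :
    ∃ δ, 0 < δ ∧ ∀ w : ℝ × ℝ, dist w (s / h₂, t / h₁) < δ →
      phi h₁ h₂ w ∈ sqr ∧ checkerboard α₁ α₂ α₃ α₄ (phi h₁ h₂ w) = α₄ := by
  have hr : (0 : ℝ) < h₁ ^ 2 + h₂ ^ 2 := by positivity
  have habs := abs_div_lt (mul_ne_zero hh₁ hh₂) hA2
  exact corner_core α₁ α₂ α₃ α₄ h₁ h₂ s t α₄ hh₁ hh₂ (-((h₁ ^ 2 + h₂ ^ 2) / 2)) 0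
    0 ((h₁ ^ 2 + h₂ ^ 2) / 2)
    ⟨(abs_lt.1 habs).1, div_neg_of_mul_neg hA⟩ ⟨hB, (abs_lt.1 hB2).2⟩
    le_rfl (by linarith) (by linarith) le_rfl
    (fun p hp1 hp2 => check_val₄ α₁ α₂ α₃ α₄ p hp1.2 hp2.1)

set_option maxHeartbeats 4000000 in
/-- If the four-phase checkerboard conductivity factorizes as a tensor product
in the rotated coordinates `z₁ = h₁y₁ + h₂y₂`, `z₂ = h₁y₂ − h₂y₁` with
`h₁, h₂ ≠ 0`, then all four phases coincide, i.e. the checkerboard is constant. -/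
theorem checkerboard_rotated_tensorProduct_constant (α₁ α₂ α₃ α₄ : ℝ)
    (hα₁ : 0 < α₁) (hα₂ : 0 < α₂) (hα₃ : 0 < α₃) (hα₄ : 0 < α₄)
    (h₁ h₂ : ℝ) (hh₁ : h₁ ≠ 0) (hh₂ : h₂ ≠ 0)
    (f g : ℝ → ℝ) (hf : Measurable f) (hg : Measurable g)
    (hfact : ∀ᵐ y ∂(volume.restrict
        (Set.Ioo (-(1 : ℝ) / 2) (1 / 2) ×ˢ Set.Ioo (-(1 : ℝ) / 2) (1 / 2))),
      checkerboard α₁ α₂ α₃ α₄ y = f (h₁ * y.1 + h₂ * y.2) * g (h₁ * y.2 - h₂ * y.1)) :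
    α₁ = α₂ ∧ α₂ = α₃ ∧ α₃ = α₄ := by
  have hq : (0:ℝ) < h₁^2 := by positivity
  have hw : (0:ℝ) < h₂^2 := by positivity
  have hr : (0:ℝ) < h₁^2 + h₂^2 := by positivity
  have hrne : h₁^2 + h₂^2 ≠ 0 := hr.ne'
  have hk0 : h₁*h₂ ≠ 0 := mul_ne_zero hh₁ hh₂
  have hfact' : ∀ᵐ y : ℝ × ℝ, y ∈ sqr →
      checkerboard α₁ α₂ α₃ α₄ y = f (h₁ * y.1 + h₂ * y.2) * g (h₁ * y.2 - h₂ * y.1) :=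
    (ae_restrict_iff' (measurableSet_Ioo.prod measurableSet_Ioo)).1 hfact
  have H0 := stepA h₁ h₂ hrne hfact'
  have e1 : ∀ z : ℝ × ℝ, h₁ * (phi h₁ h₂ z).1 + h₂ * (phi h₁ h₂ z).2 = z.1 := by
    intro z; simp only [phi]; field_simp; ring
  have e2 : ∀ z : ℝ × ℝ, h₁ * (phi h₁ h₂ z).2 - h₂ * (phi h₁ h₂ z).1 = z.2 := by
    intro z; simp only [phi]; field_simp; ring
  have H : ∀ᵐ z : ℝ × ℝ, phi h₁ h₂ z ∈ sqr →
      checkerboard α₁ α₂ α₃ α₄ (phi h₁ h₂ z) = f z.1 * g z.2 := by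
    filter_upwards [H0] with z hz hsq
    rw [← e1 z, ← e2 z]
    exact hz hsq
  refine ⟨?_, ?_, ?_⟩
  · rcases hk0.lt_or_gt with hk | hk
    · -- α₁ = α₂, k<0
      have hK : (0:ℝ) < -(h₁*h₂) := neg_pos.2 hk
      obtain ⟨ε, hε, hεk, hεr⟩ : ∃ ε : ℝ, 0 < ε ∧ 32*ε ≤ -(h₁*h₂) ∧ 32*ε ≤ h₁^2+h₂^2 :=
        ⟨min (-(h₁*h₂)) (h₁^2+h₂^2)/32, div_pos (lt_min hK hr) (by norm_num),
          by linarith [min_le_left (-(h₁*h₂)) (h₁^2+h₂^2)],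
          by linarith [min_le_right (-(h₁*h₂)) (h₁^2+h₂^2)]⟩
      have hhA := mul_le_mul_of_nonneg_left hεk hr.le
      have hKr : (0:ℝ) < (-(h₁*h₂))*(h₁^2+h₂^2) := mul_pos hK hr
      have hprod : α₂ * α₁ = α₂ * α₂ :=
        rel α₁ α₂ α₃ α₄ h₁ h₂ f g (-(4*ε)/h₂) (ε/h₁) (-(2*ε)/h₂) (3*ε/h₁) α₂ α₂ α₂ α₁ H
        (corner₂ α₁ α₂ α₃ α₄ h₁ h₂ (-(4*ε)) (ε) hh₁ hh₂
          (mul_pos_of_neg_of_neg hk (show h₁^2*(-(4*ε)) - h₂^2*(ε) < 0 by nlinarith [mul_pos hε hq, mul_pos hε hw, mul_pos (mul_pos hq hw) hε]))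
          (by rw [abs_of_neg hk, abs_of_neg (show h₁^2*(-(4*ε)) - h₂^2*(ε) < 0 by nlinarith [mul_pos hε hq, mul_pos hε hw, mul_pos (mul_pos hq hw) hε])]; nlinarith [hhA, hKr, mul_pos hε hq, mul_pos hε hw, mul_pos (mul_pos hq hw) hε])
          (show (-(4*ε)) + (ε) < 0 by linarith)
          (by rw [abs_of_neg (show (-(4*ε)) + (ε) < 0 by linarith)]; linarith))
        (corner₂ α₁ α₂ α₃ α₄ h₁ h₂ (-(4*ε)) (3*ε) hh₁ hh₂
          (mul_pos_of_neg_of_neg hk (show h₁^2*(-(4*ε)) - h₂^2*(3*ε) < 0 by nlinarith [mul_pos hε hq, mul_pos hε hw, mul_pos (mul_pos hq hw) hε]))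
          (by rw [abs_of_neg hk, abs_of_neg (show h₁^2*(-(4*ε)) - h₂^2*(3*ε) < 0 by nlinarith [mul_pos hε hq, mul_pos hε hw, mul_pos (mul_pos hq hw) hε])]; nlinarith [hhA, hKr, mul_pos hε hq, mul_pos hε hw, mul_pos (mul_pos hq hw) hε])
          (show (-(4*ε)) + (3*ε) < 0 by linarith)
          (by rw [abs_of_neg (show (-(4*ε)) + (3*ε) < 0 by linarith)]; linarith))
        (corner₂ α₁ α₂ α₃ α₄ h₁ h₂ (-(2*ε)) (ε) hh₁ hh₂
          (mul_pos_of_neg_of_neg hk (show h₁^2*(-(2*ε)) - h₂^2*(ε) < 0 by nlinarith [mul_pos hε hq, mul_pos hε hw, mul_pos (mul_pos hq hw) hε]))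
          (by rw [abs_of_neg hk, abs_of_neg (show h₁^2*(-(2*ε)) - h₂^2*(ε) < 0 by nlinarith [mul_pos hε hq, mul_pos hε hw, mul_pos (mul_pos hq hw) hε])]; nlinarith [hhA, hKr, mul_pos hε hq, mul_pos hε hw, mul_pos (mul_pos hq hw) hε])
          (show (-(2*ε)) + (ε) < 0 by linarith)
          (by rw [abs_of_neg (show (-(2*ε)) + (ε) < 0 by linarith)]; linarith))
        (corner₁ α₁ α₂ α₃ α₄ h₁ h₂ (-(2*ε)) (3*ε) hh₁ hh₂
          (mul_pos_of_neg_of_neg hk (show h₁^2*(-(2*ε)) - h₂^2*(3*ε) < 0 by nlinarith [mul_pos hε hq, mul_pos hε hw, mul_pos (mul_pos hq hw) hε]))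
          (by rw [abs_of_neg hk, abs_of_neg (show h₁^2*(-(2*ε)) - h₂^2*(3*ε) < 0 by nlinarith [mul_pos hε hq, mul_pos hε hw, mul_pos (mul_pos hq hw) hε])]; nlinarith [hhA, hKr, mul_pos hε hq, mul_pos hε hw, mul_pos (mul_pos hq hw) hε])
          (show (0:ℝ) < (-(2*ε)) + (3*ε) by linarith)
          (by rw [abs_of_pos (show (0:ℝ) < (-(2*ε)) + (3*ε) by linarith)]; linarith))
      exact mul_left_cancel₀ hα₂.ne' hprod

    · -- α₁ = α₂, k>0
      have hK : (0:ℝ) < h₁*h₂ := hk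
      obtain ⟨ε, hε, hεk, hεr⟩ : ∃ ε : ℝ, 0 < ε ∧ 32*ε ≤ h₁*h₂ ∧ 32*ε ≤ h₁^2+h₂^2 :=
        ⟨min (h₁*h₂) (h₁^2+h₂^2)/32, div_pos (lt_min hK hr) (by norm_num),
          by linarith [min_le_left (h₁*h₂) (h₁^2+h₂^2)],
          by linarith [min_le_right (h₁*h₂) (h₁^2+h₂^2)]⟩
      have hhA := mul_le_mul_of_nonneg_left hεk hr.le
      have hKr : (0:ℝ) < (h₁*h₂)*(h₁^2+h₂^2) := mul_pos hK hr
      have hprod : α₁ * α₂ = α₁ * α₁ :=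
        rel α₁ α₂ α₃ α₄ h₁ h₂ f g (4*ε/h₂) (-ε/h₁) (2*ε/h₂) (-(3*ε)/h₁) α₁ α₁ α₁ α₂ H
        (corner₁ α₁ α₂ α₃ α₄ h₁ h₂ (4*ε) (-ε) hh₁ hh₂
          (mul_pos hk (show (0:ℝ) < h₁^2*(4*ε) - h₂^2*(-ε) by nlinarith [mul_pos hε hq, mul_pos hε hw, mul_pos (mul_pos hq hw) hε]))
          (by rw [abs_of_pos hk, abs_of_pos (show (0:ℝ) < h₁^2*(4*ε) - h₂^2*(-ε) by nlinarith [mul_pos hε hq, mul_pos hε hw, mul_pos (mul_pos hq hw) hε])]; nlinarith [hhA, hKr, mul_pos hε hq, mul_pos hε hw, mul_pos (mul_pos hq hw) hε])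
          (show (0:ℝ) < (4*ε) + (-ε) by linarith)
          (by rw [abs_of_pos (show (0:ℝ) < (4*ε) + (-ε) by linarith)]; linarith))
        (corner₁ α₁ α₂ α₃ α₄ h₁ h₂ (4*ε) (-(3*ε)) hh₁ hh₂
          (mul_pos hk (show (0:ℝ) < h₁^2*(4*ε) - h₂^2*(-(3*ε)) by nlinarith [mul_pos hε hq, mul_pos hε hw, mul_pos (mul_pos hq hw) hε]))
          (by rw [abs_of_pos hk, abs_of_pos (show (0:ℝ) < h₁^2*(4*ε) - h₂^2*(-(3*ε)) by nlinarith [mul_pos hε hq, mul_pos hε hw, mul_pos (mul_pos hq hw) hε])]; nlinarith [hhA, hKr, mul_pos hε hq, mul_pos hε hw, mul_pos (mul_pos hq hw) hε])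
          (show (0:ℝ) < (4*ε) + (-(3*ε)) by linarith)
          (by rw [abs_of_pos (show (0:ℝ) < (4*ε) + (-(3*ε)) by linarith)]; linarith))
        (corner₁ α₁ α₂ α₃ α₄ h₁ h₂ (2*ε) (-ε) hh₁ hh₂
          (mul_pos hk (show (0:ℝ) < h₁^2*(2*ε) - h₂^2*(-ε) by nlinarith [mul_pos hε hq, mul_pos hε hw, mul_pos (mul_pos hq hw) hε]))
          (by rw [abs_of_pos hk, abs_of_pos (show (0:ℝ) < h₁^2*(2*ε) - h₂^2*(-ε) by nlinarith [mul_pos hε hq, mul_pos hε hw, mul_pos (mul_pos hq hw) hε])]; nlinarith [hhA, hKr, mul_pos hε hq, mul_pos hε hw, mul_pos (mul_pos hq hw) hε])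
          (show (0:ℝ) < (2*ε) + (-ε) by linarith)
          (by rw [abs_of_pos (show (0:ℝ) < (2*ε) + (-ε) by linarith)]; linarith))
        (corner₂ α₁ α₂ α₃ α₄ h₁ h₂ (2*ε) (-(3*ε)) hh₁ hh₂
          (mul_pos hk (show (0:ℝ) < h₁^2*(2*ε) - h₂^2*(-(3*ε)) by nlinarith [mul_pos hε hq, mul_pos hε hw, mul_pos (mul_pos hq hw) hε]))
          (by rw [abs_of_pos hk, abs_of_pos (show (0:ℝ) < h₁^2*(2*ε) - h₂^2*(-(3*ε)) by nlinarith [mul_pos hε hq, mul_pos hε hw, mul_pos (mul_pos hq hw) hε])]; nlinarith [hhA, hKr, mul_pos hε hq, mul_pos hε hw, mul_pos (mul_pos hq hw) hε])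
          (show (2*ε) + (-(3*ε)) < 0 by linarith)
          (by rw [abs_of_neg (show (2*ε) + (-(3*ε)) < 0 by linarith)]; linarith))
      exact (mul_left_cancel₀ hα₁.ne' hprod).symm

  · rcases hk0.lt_or_gt with hk | hk
    · -- α₂ = α₃, k<0
      have hK : (0:ℝ) < -(h₁*h₂) := neg_pos.2 hk
      obtain ⟨ε, hε, hεk, hε1⟩ : ∃ ε : ℝ, 0 < ε ∧ 32*(-(h₁*h₂))*ε ≤ h₁^2+h₂^2 ∧ 32*ε ≤ 1 := by
        refine ⟨min ((h₁^2+h₂^2)/(32*(-(h₁*h₂)))) (1/32),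
          lt_min (div_pos hr (mul_pos (by norm_num) hK)) (by norm_num), ?_, ?_⟩
        · have h1 : min ((h₁^2+h₂^2)/(32*(-(h₁*h₂)))) (1/32) ≤ (h₁^2+h₂^2)/(32*(-(h₁*h₂))) := min_le_left _ _
          rw [le_div_iff₀ (mul_pos (by norm_num : (0:ℝ) < 32) hK)] at h1
          nlinarith [h1]
        · have h2 : min ((h₁^2+h₂^2)/(32*(-(h₁*h₂)))) (1/32) ≤ 1/32 := min_le_right _ _
          linarith
      have hhA := mul_le_mul_of_nonneg_left hεk hK.le
      have hKr : (0:ℝ) < (-(h₁*h₂))*(h₁^2+h₂^2) := mul_pos hK hr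
      have hhB := mul_le_mul_of_nonneg_left hε1 hr.le
      have hprod : α₂ * α₃ = α₂ * α₂ :=
        rel α₁ α₂ α₃ α₄ h₁ h₂ f g (-(4*h₂^2*ε)/h₂) ((0:ℝ)/h₁) (-(2*h₂^2*ε)/h₂) (-(3*h₁^2*ε)/h₁) α₂ α₂ α₂ α₃ H
        (corner₂ α₁ α₂ α₃ α₄ h₁ h₂ (-(4*h₂^2*ε)) ((0:ℝ)) hh₁ hh₂
          (mul_pos_of_neg_of_neg hk (show h₁^2*(-(4*h₂^2*ε)) - h₂^2*((0:ℝ)) < 0 by nlinarith [mul_pos hε hq, mul_pos hε hw, mul_pos (mul_pos hq hw) hε]))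
          (by rw [abs_of_neg hk, abs_of_neg (show h₁^2*(-(4*h₂^2*ε)) - h₂^2*((0:ℝ)) < 0 by nlinarith [mul_pos hε hq, mul_pos hε hw, mul_pos (mul_pos hq hw) hε])]; nlinarith [hhA, hKr, mul_pos hε hq, mul_pos hε hw, mul_pos (mul_pos hq hw) hε])
          (show (-(4*h₂^2*ε)) + ((0:ℝ)) < 0 by nlinarith [mul_pos hε hq, mul_pos hε hw, mul_pos (mul_pos hq hw) hε])
          (by rw [abs_of_neg (show (-(4*h₂^2*ε)) + ((0:ℝ)) < 0 by nlinarith [mul_pos hε hq, mul_pos hε hw, mul_pos (mul_pos hq hw) hε])]; nlinarith [hhB, mul_pos hε hq, mul_pos hε hw, mul_pos (mul_pos hq hw) hε]))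
        (corner₂ α₁ α₂ α₃ α₄ h₁ h₂ (-(4*h₂^2*ε)) (-(3*h₁^2*ε)) hh₁ hh₂
          (mul_pos_of_neg_of_neg hk (show h₁^2*(-(4*h₂^2*ε)) - h₂^2*(-(3*h₁^2*ε)) < 0 by nlinarith [mul_pos hε hq, mul_pos hε hw, mul_pos (mul_pos hq hw) hε]))
          (by rw [abs_of_neg hk, abs_of_neg (show h₁^2*(-(4*h₂^2*ε)) - h₂^2*(-(3*h₁^2*ε)) < 0 by nlinarith [mul_pos hε hq, mul_pos hε hw, mul_pos (mul_pos hq hw) hε])]; nlinarith [hhA, hKr, mul_pos hε hq, mul_pos hε hw, mul_pos (mul_pos hq hw) hε])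
          (show (-(4*h₂^2*ε)) + (-(3*h₁^2*ε)) < 0 by nlinarith [mul_pos hε hq, mul_pos hε hw, mul_pos (mul_pos hq hw) hε])
          (by rw [abs_of_neg (show (-(4*h₂^2*ε)) + (-(3*h₁^2*ε)) < 0 by nlinarith [mul_pos hε hq, mul_pos hε hw, mul_pos (mul_pos hq hw) hε])]; nlinarith [hhB, mul_pos hε hq, mul_pos hε hw, mul_pos (mul_pos hq hw) hε]))
        (corner₂ α₁ α₂ α₃ α₄ h₁ h₂ (-(2*h₂^2*ε)) ((0:ℝ)) hh₁ hh₂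
          (mul_pos_of_neg_of_neg hk (show h₁^2*(-(2*h₂^2*ε)) - h₂^2*((0:ℝ)) < 0 by nlinarith [mul_pos hε hq, mul_pos hε hw, mul_pos (mul_pos hq hw) hε]))
          (by rw [abs_of_neg hk, abs_of_neg (show h₁^2*(-(2*h₂^2*ε)) - h₂^2*((0:ℝ)) < 0 by nlinarith [mul_pos hε hq, mul_pos hε hw, mul_pos (mul_pos hq hw) hε])]; nlinarith [hhA, hKr, mul_pos hε hq, mul_pos hε hw, mul_pos (mul_pos hq hw) hε])
          (show (-(2*h₂^2*ε)) + ((0:ℝ)) < 0 by nlinarith [mul_pos hε hq, mul_pos hε hw, mul_pos (mul_pos hq hw) hε])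
          (by rw [abs_of_neg (show (-(2*h₂^2*ε)) + ((0:ℝ)) < 0 by nlinarith [mul_pos hε hq, mul_pos hε hw, mul_pos (mul_pos hq hw) hε])]; nlinarith [hhB, mul_pos hε hq, mul_pos hε hw, mul_pos (mul_pos hq hw) hε]))
        (corner₃ α₁ α₂ α₃ α₄ h₁ h₂ (-(2*h₂^2*ε)) (-(3*h₁^2*ε)) hh₁ hh₂
          (mul_neg_of_neg_of_pos hk (show (0:ℝ) < h₁^2*(-(2*h₂^2*ε)) - h₂^2*(-(3*h₁^2*ε)) by nlinarith [mul_pos hε hq, mul_pos hε hw, mul_pos (mul_pos hq hw) hε]))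
          (by rw [abs_of_neg hk, abs_of_pos (show (0:ℝ) < h₁^2*(-(2*h₂^2*ε)) - h₂^2*(-(3*h₁^2*ε)) by nlinarith [mul_pos hε hq, mul_pos hε hw, mul_pos (mul_pos hq hw) hε])]; nlinarith [hhA, hKr, mul_pos hε hq, mul_pos hε hw, mul_pos (mul_pos hq hw) hε])
          (show (-(2*h₂^2*ε)) + (-(3*h₁^2*ε)) < 0 by nlinarith [mul_pos hε hq, mul_pos hε hw, mul_pos (mul_pos hq hw) hε])
          (by rw [abs_of_neg (show (-(2*h₂^2*ε)) + (-(3*h₁^2*ε)) < 0 by nlinarith [mul_pos hε hq, mul_pos hε hw, mul_pos (mul_pos hq hw) hε])]; nlinarith [hhB, mul_pos hε hq, mul_pos hε hw, mul_pos (mul_pos hq hw) hε]))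
      exact (mul_left_cancel₀ hα₂.ne' hprod).symm

    · -- α₂ = α₃, k>0
      have hK : (0:ℝ) < h₁*h₂ := hk
      obtain ⟨ε, hε, hεk, hε1⟩ : ∃ ε : ℝ, 0 < ε ∧ 32*(h₁*h₂)*ε ≤ h₁^2+h₂^2 ∧ 32*ε ≤ 1 := by
        refine ⟨min ((h₁^2+h₂^2)/(32*(h₁*h₂))) (1/32),
          lt_min (div_pos hr (mul_pos (by norm_num) hK)) (by norm_num), ?_, ?_⟩
        · have h1 : min ((h₁^2+h₂^2)/(32*(h₁*h₂))) (1/32) ≤ (h₁^2+h₂^2)/(32*(h₁*h₂)) := min_le_left _ _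
          rw [le_div_iff₀ (mul_pos (by norm_num : (0:ℝ) < 32) hK)] at h1
          nlinarith [h1]
        · have h2 : min ((h₁^2+h₂^2)/(32*(h₁*h₂))) (1/32) ≤ 1/32 := min_le_right _ _
          linarith
      have hhA := mul_le_mul_of_nonneg_left hεk hK.le
      have hKr : (0:ℝ) < (h₁*h₂)*(h₁^2+h₂^2) := mul_pos hK hr
      have hhB := mul_le_mul_of_nonneg_left hε1 hr.le
      have hprod : α₂ * α₃ = α₂ * α₂ :=
        rel α₁ α₂ α₃ α₄ h₁ h₂ f g ((0:ℝ)/h₂) (-(4*h₁^2*ε)/h₁) (-(3*h₂^2*ε)/h₂) (-(2*h₁^2*ε)/h₁) α₂ α₂ α₂ α₃ H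
        (corner₂ α₁ α₂ α₃ α₄ h₁ h₂ ((0:ℝ)) (-(4*h₁^2*ε)) hh₁ hh₂
          (mul_pos hk (show (0:ℝ) < h₁^2*((0:ℝ)) - h₂^2*(-(4*h₁^2*ε)) by nlinarith [mul_pos hε hq, mul_pos hε hw, mul_pos (mul_pos hq hw) hε]))
          (by rw [abs_of_pos hk, abs_of_pos (show (0:ℝ) < h₁^2*((0:ℝ)) - h₂^2*(-(4*h₁^2*ε)) by nlinarith [mul_pos hε hq, mul_pos hε hw, mul_pos (mul_pos hq hw) hε])]; nlinarith [hhA, hKr, mul_pos hε hq, mul_pos hε hw, mul_pos (mul_pos hq hw) hε])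
          (show ((0:ℝ)) + (-(4*h₁^2*ε)) < 0 by nlinarith [mul_pos hε hq, mul_pos hε hw, mul_pos (mul_pos hq hw) hε])
          (by rw [abs_of_neg (show ((0:ℝ)) + (-(4*h₁^2*ε)) < 0 by nlinarith [mul_pos hε hq, mul_pos hε hw, mul_pos (mul_pos hq hw) hε])]; nlinarith [hhB, mul_pos hε hq, mul_pos hε hw, mul_pos (mul_pos hq hw) hε]))
        (corner₂ α₁ α₂ α₃ α₄ h₁ h₂ ((0:ℝ)) (-(2*h₁^2*ε)) hh₁ hh₂
          (mul_pos hk (show (0:ℝ) < h₁^2*((0:ℝ)) - h₂^2*(-(2*h₁^2*ε)) by nlinarith [mul_pos hε hq, mul_pos hε hw, mul_pos (mul_pos hq hw) hε]))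
          (by rw [abs_of_pos hk, abs_of_pos (show (0:ℝ) < h₁^2*((0:ℝ)) - h₂^2*(-(2*h₁^2*ε)) by nlinarith [mul_pos hε hq, mul_pos hε hw, mul_pos (mul_pos hq hw) hε])]; nlinarith [hhA, hKr, mul_pos hε hq, mul_pos hε hw, mul_pos (mul_pos hq hw) hε])
          (show ((0:ℝ)) + (-(2*h₁^2*ε)) < 0 by nlinarith [mul_pos hε hq, mul_pos hε hw, mul_pos (mul_pos hq hw) hε])
          (by rw [abs_of_neg (show ((0:ℝ)) + (-(2*h₁^2*ε)) < 0 by nlinarith [mul_pos hε hq, mul_pos hε hw, mul_pos (mul_pos hq hw) hε])]; nlinarith [hhB, mul_pos hε hq, mul_pos hε hw, mul_pos (mul_pos hq hw) hε]))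
        (corner₂ α₁ α₂ α₃ α₄ h₁ h₂ (-(3*h₂^2*ε)) (-(4*h₁^2*ε)) hh₁ hh₂
          (mul_pos hk (show (0:ℝ) < h₁^2*(-(3*h₂^2*ε)) - h₂^2*(-(4*h₁^2*ε)) by nlinarith [mul_pos hε hq, mul_pos hε hw, mul_pos (mul_pos hq hw) hε]))
          (by rw [abs_of_pos hk, abs_of_pos (show (0:ℝ) < h₁^2*(-(3*h₂^2*ε)) - h₂^2*(-(4*h₁^2*ε)) by nlinarith [mul_pos hε hq, mul_pos hε hw, mul_pos (mul_pos hq hw) hε])]; nlinarith [hhA, hKr, mul_pos hε hq, mul_pos hε hw, mul_pos (mul_pos hq hw) hε])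
          (show (-(3*h₂^2*ε)) + (-(4*h₁^2*ε)) < 0 by nlinarith [mul_pos hε hq, mul_pos hε hw, mul_pos (mul_pos hq hw) hε])
          (by rw [abs_of_neg (show (-(3*h₂^2*ε)) + (-(4*h₁^2*ε)) < 0 by nlinarith [mul_pos hε hq, mul_pos hε hw, mul_pos (mul_pos hq hw) hε])]; nlinarith [hhB, mul_pos hε hq, mul_pos hε hw, mul_pos (mul_pos hq hw) hε]))
        (corner₃ α₁ α₂ α₃ α₄ h₁ h₂ (-(3*h₂^2*ε)) (-(2*h₁^2*ε)) hh₁ hh₂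
          (mul_neg_of_pos_of_neg hk (show h₁^2*(-(3*h₂^2*ε)) - h₂^2*(-(2*h₁^2*ε)) < 0 by nlinarith [mul_pos hε hq, mul_pos hε hw, mul_pos (mul_pos hq hw) hε]))
          (by rw [abs_of_pos hk, abs_of_neg (show h₁^2*(-(3*h₂^2*ε)) - h₂^2*(-(2*h₁^2*ε)) < 0 by nlinarith [mul_pos hε hq, mul_pos hε hw, mul_pos (mul_pos hq hw) hε])]; nlinarith [hhA, hKr, mul_pos hε hq, mul_pos hε hw, mul_pos (mul_pos hq hw) hε])
          (show (-(3*h₂^2*ε)) + (-(2*h₁^2*ε)) < 0 by nlinarith [mul_pos hε hq, mul_pos hε hw, mul_pos (mul_pos hq hw) hε])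
          (by rw [abs_of_neg (show (-(3*h₂^2*ε)) + (-(2*h₁^2*ε)) < 0 by nlinarith [mul_pos hε hq, mul_pos hε hw, mul_pos (mul_pos hq hw) hε])]; nlinarith [hhB, mul_pos hε hq, mul_pos hε hw, mul_pos (mul_pos hq hw) hε]))
      exact (mul_left_cancel₀ hα₂.ne' hprod).symm

  · rcases hk0.lt_or_gt with hk | hk
    · -- α₃ = α₄, k<0
      have hK : (0:ℝ) < -(h₁*h₂) := neg_pos.2 hk
      obtain ⟨ε, hε, hεk, hεr⟩ : ∃ ε : ℝ, 0 < ε ∧ 32*ε ≤ -(h₁*h₂) ∧ 32*ε ≤ h₁^2+h₂^2 :=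
        ⟨min (-(h₁*h₂)) (h₁^2+h₂^2)/32, div_pos (lt_min hK hr) (by norm_num),
          by linarith [min_le_left (-(h₁*h₂)) (h₁^2+h₂^2)],
          by linarith [min_le_right (-(h₁*h₂)) (h₁^2+h₂^2)]⟩
      have hhA := mul_le_mul_of_nonneg_left hεk hr.le
      have hKr : (0:ℝ) < (-(h₁*h₂))*(h₁^2+h₂^2) := mul_pos hK hr
      have hprod : α₄ * α₃ = α₄ * α₄ :=
        rel α₁ α₂ α₃ α₄ h₁ h₂ f g (4*ε/h₂) (-ε/h₁) (2*ε/h₂) (-(3*ε)/h₁) α₄ α₄ α₄ α₃ H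
        (corner₄ α₁ α₂ α₃ α₄ h₁ h₂ (4*ε) (-ε) hh₁ hh₂
          (mul_neg_of_neg_of_pos hk (show (0:ℝ) < h₁^2*(4*ε) - h₂^2*(-ε) by nlinarith [mul_pos hε hq, mul_pos hε hw, mul_pos (mul_pos hq hw) hε]))
          (by rw [abs_of_neg hk, abs_of_pos (show (0:ℝ) < h₁^2*(4*ε) - h₂^2*(-ε) by nlinarith [mul_pos hε hq, mul_pos hε hw, mul_pos (mul_pos hq hw) hε])]; nlinarith [hhA, hKr, mul_pos hε hq, mul_pos hε hw, mul_pos (mul_pos hq hw) hε])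
          (show (0:ℝ) < (4*ε) + (-ε) by linarith)
          (by rw [abs_of_pos (show (0:ℝ) < (4*ε) + (-ε) by linarith)]; linarith))
        (corner₄ α₁ α₂ α₃ α₄ h₁ h₂ (4*ε) (-(3*ε)) hh₁ hh₂
          (mul_neg_of_neg_of_pos hk (show (0:ℝ) < h₁^2*(4*ε) - h₂^2*(-(3*ε)) by nlinarith [mul_pos hε hq, mul_pos hε hw, mul_pos (mul_pos hq hw) hε]))
          (by rw [abs_of_neg hk, abs_of_pos (show (0:ℝ) < h₁^2*(4*ε) - h₂^2*(-(3*ε)) by nlinarith [mul_pos hε hq, mul_pos hε hw, mul_pos (mul_pos hq hw) hε])]; nlinarith [hhA, hKr, mul_pos hε hq, mul_pos hε hw, mul_pos (mul_pos hq hw) hε])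
          (show (0:ℝ) < (4*ε) + (-(3*ε)) by linarith)
          (by rw [abs_of_pos (show (0:ℝ) < (4*ε) + (-(3*ε)) by linarith)]; linarith))
        (corner₄ α₁ α₂ α₃ α₄ h₁ h₂ (2*ε) (-ε) hh₁ hh₂
          (mul_neg_of_neg_of_pos hk (show (0:ℝ) < h₁^2*(2*ε) - h₂^2*(-ε) by nlinarith [mul_pos hε hq, mul_pos hε hw, mul_pos (mul_pos hq hw) hε]))
          (by rw [abs_of_neg hk, abs_of_pos (show (0:ℝ) < h₁^2*(2*ε) - h₂^2*(-ε) by nlinarith [mul_pos hε hq, mul_pos hε hw, mul_pos (mul_pos hq hw) hε])]; nlinarith [hhA, hKr, mul_pos hε hq, mul_pos hε hw, mul_pos (mul_pos hq hw) hε])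
          (show (0:ℝ) < (2*ε) + (-ε) by linarith)
          (by rw [abs_of_pos (show (0:ℝ) < (2*ε) + (-ε) by linarith)]; linarith))
        (corner₃ α₁ α₂ α₃ α₄ h₁ h₂ (2*ε) (-(3*ε)) hh₁ hh₂
          (mul_neg_of_neg_of_pos hk (show (0:ℝ) < h₁^2*(2*ε) - h₂^2*(-(3*ε)) by nlinarith [mul_pos hε hq, mul_pos hε hw, mul_pos (mul_pos hq hw) hε]))
          (by rw [abs_of_neg hk, abs_of_pos (show (0:ℝ) < h₁^2*(2*ε) - h₂^2*(-(3*ε)) by nlinarith [mul_pos hε hq, mul_pos hε hw, mul_pos (mul_pos hq hw) hε])]; nlinarith [hhA, hKr, mul_pos hε hq, mul_pos hε hw, mul_pos (mul_pos hq hw) hε])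
          (show (2*ε) + (-(3*ε)) < 0 by linarith)
          (by rw [abs_of_neg (show (2*ε) + (-(3*ε)) < 0 by linarith)]; linarith))
      exact mul_left_cancel₀ hα₄.ne' hprod

    · -- α₃ = α₄, k>0
      have hK : (0:ℝ) < h₁*h₂ := hk
      obtain ⟨ε, hε, hεk, hεr⟩ : ∃ ε : ℝ, 0 < ε ∧ 32*ε ≤ h₁*h₂ ∧ 32*ε ≤ h₁^2+h₂^2 :=
        ⟨min (h₁*h₂) (h₁^2+h₂^2)/32, div_pos (lt_min hK hr) (by norm_num),
          by linarith [min_le_left (h₁*h₂) (h₁^2+h₂^2)],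
          by linarith [min_le_right (h₁*h₂) (h₁^2+h₂^2)]⟩
      have hhA := mul_le_mul_of_nonneg_left hεk hr.le
      have hKr : (0:ℝ) < (h₁*h₂)*(h₁^2+h₂^2) := mul_pos hK hr
      have hprod : α₃ * α₄ = α₃ * α₃ :=
        rel α₁ α₂ α₃ α₄ h₁ h₂ f g (-(4*ε)/h₂) (ε/h₁) (-(2*ε)/h₂) (3*ε/h₁) α₃ α₃ α₃ α₄ H
        (corner₃ α₁ α₂ α₃ α₄ h₁ h₂ (-(4*ε)) (ε) hh₁ hh₂
          (mul_neg_of_pos_of_neg hk (show h₁^2*(-(4*ε)) - h₂^2*(ε) < 0 by nlinarith [mul_pos hε hq, mul_pos hε hw, mul_pos (mul_pos hq hw) hε]))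
          (by rw [abs_of_pos hk, abs_of_neg (show h₁^2*(-(4*ε)) - h₂^2*(ε) < 0 by nlinarith [mul_pos hε hq, mul_pos hε hw, mul_pos (mul_pos hq hw) hε])]; nlinarith [hhA, hKr, mul_pos hε hq, mul_pos hε hw, mul_pos (mul_pos hq hw) hε])
          (show (-(4*ε)) + (ε) < 0 by linarith)
          (by rw [abs_of_neg (show (-(4*ε)) + (ε) < 0 by linarith)]; linarith))
        (corner₃ α₁ α₂ α₃ α₄ h₁ h₂ (-(4*ε)) (3*ε) hh₁ hh₂
          (mul_neg_of_pos_of_neg hk (show h₁^2*(-(4*ε)) - h₂^2*(3*ε) < 0 by nlinarith [mul_pos hε hq, mul_pos hε hw, mul_pos (mul_pos hq hw) hε]))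
          (by rw [abs_of_pos hk, abs_of_neg (show h₁^2*(-(4*ε)) - h₂^2*(3*ε) < 0 by nlinarith [mul_pos hε hq, mul_pos hε hw, mul_pos (mul_pos hq hw) hε])]; nlinarith [hhA, hKr, mul_pos hε hq, mul_pos hε hw, mul_pos (mul_pos hq hw) hε])
          (show (-(4*ε)) + (3*ε) < 0 by linarith)
          (by rw [abs_of_neg (show (-(4*ε)) + (3*ε) < 0 by linarith)]; linarith))
        (corner₃ α₁ α₂ α₃ α₄ h₁ h₂ (-(2*ε)) (ε) hh₁ hh₂
          (mul_neg_of_pos_of_neg hk (show h₁^2*(-(2*ε)) - h₂^2*(ε) < 0 by nlinarith [mul_pos hε hq, mul_pos hε hw, mul_pos (mul_pos hq hw) hε]))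
          (by rw [abs_of_pos hk, abs_of_neg (show h₁^2*(-(2*ε)) - h₂^2*(ε) < 0 by nlinarith [mul_pos hε hq, mul_pos hε hw, mul_pos (mul_pos hq hw) hε])]; nlinarith [hhA, hKr, mul_pos hε hq, mul_pos hε hw, mul_pos (mul_pos hq hw) hε])
          (show (-(2*ε)) + (ε) < 0 by linarith)
          (by rw [abs_of_neg (show (-(2*ε)) + (ε) < 0 by linarith)]; linarith))
        (corner₄ α₁ α₂ α₃ α₄ h₁ h₂ (-(2*ε)) (3*ε) hh₁ hh₂
          (mul_neg_of_pos_of_neg hk (show h₁^2*(-(2*ε)) - h₂^2*(3*ε) < 0 by nlinarith [mul_pos hε hq, mul_pos hε hw, mul_pos (mul_pos hq hw) hε]))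
          (by rw [abs_of_pos hk, abs_of_neg (show h₁^2*(-(2*ε)) - h₂^2*(3*ε) < 0 by nlinarith [mul_pos hε hq, mul_pos hε hw, mul_pos (mul_pos hq hw) hε])]; nlinarith [hhA, hKr, mul_pos hε hq, mul_pos hε hw, mul_pos (mul_pos hq hw) hε])
          (show (0:ℝ) < (-(2*ε)) + (3*ε) by linarith)
          (by rw [abs_of_pos (show (0:ℝ) < (-(2*ε)) + (3*ε) by linarith)]; linarith))
      exact (mul_left_cancel₀ hα₃.ne' hprod).symm
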